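/- Let S and T be semigroups and let U be a subdirect product of S and T, i.e. a subsemigroup of S × T such that the coordinate projections π_S : U → S and π_T : U → T are surjective. Then there exist a semigroup F and surjective homomorphisms φ : S → F, ψ : T → F with U = {(s,t) ∈ S × T : φ(s) = ψ(t)} if and only if the kernel congruences of the projections commute: ker π_S ∘ ker π_T = ker π_T ∘ ker π_S. -/
import Mathlib


/-- Fleischer's Lemma for semigroups: a subdirect product
`U ≤ S × T` is a fiber product (i.e. equals `{(s,t) : φ(s) = ψ(t)}` for some
semigroup `F` and surjective homomorphisms `φ : S → F`, `ψ : T → F`) if and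
only if the kernel congruences of the two coordinate projections of `U`
commute under relational composition. -/
theorem stmt19 {S T : Type} [Semigroup S] [Semigroup T]
    (U : Subsemigroup (S × T))
    (hS : ∀ s : S, ∃ u ∈ U, u.1 = s) (hT : ∀ t : T, ∃ u ∈ U, u.2 = t) :
    (∃ (F : Type) (_ : Semigroup F) (φ : S →ₙ* F) (ψ : T →ₙ* F),
        Function.Surjective φ ∧ Function.Surjective ψ ∧
        ∀ p : S × T, p ∈ U ↔ φ p.1 = ψ p.2) ↔
      Relation.Comp (fun u v : U => (u : S × T).1 = (v : S × T).1)
          (fun u v : U => (u : S × T).2 = (v : S × T).2) =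
        Relation.Comp (fun u v : U => (u : S × T).2 = (v : S × T).2)
          (fun u v : U => (u : S × T).1 = (v : S × T).1) := by
  constructor
  · rintro ⟨F, _, φ, ψ, hφ, hψ, hmem⟩
    funext u w
    apply propext
    constructor
    · rintro ⟨v, h1, h2⟩
      have hmemv : ((w : S × T).1, (u : S × T).2) ∈ U := by
        apply (hmem _).2
        have hu := (hmem _).1 u.2
        have hv := (hmem _).1 v.2
        have hw := (hmem _).1 w.2
        show φ (w : S × T).1 = ψ (u : S × T).2
        calc φ (w : S × T).1 = ψ (w : S × T).2 := hw
          _ = ψ (v : S × T).2 := by rw [h2]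
          _ = φ (v : S × T).1 := hv.symm
          _ = φ (u : S × T).1 := by rw [h1]
          _ = ψ (u : S × T).2 := hu
      exact ⟨⟨_, hmemv⟩, rfl, rfl⟩
    · rintro ⟨v, h1, h2⟩
      have hmemv : ((u : S × T).1, (w : S × T).2) ∈ U := by
        apply (hmem _).2
        have hu := (hmem _).1 u.2
        have hv := (hmem _).1 v.2
        have hw := (hmem _).1 w.2
        show φ (u : S × T).1 = ψ (w : S × T).2
        calc φ (u : S × T).1 = ψ (u : S × T).2 := hu
          _ = ψ (v : S × T).2 := by rw [h1]
          _ = φ (v : S × T).1 := hv.symm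
          _ = φ (w : S × T).1 := by rw [h2]
          _ = ψ (w : S × T).2 := hw
      exact ⟨⟨_, hmemv⟩, rfl, rfl⟩
  · intro hcomm
    classical
    have hU1 : ∀ s : S, ∃ t : T, (s, t) ∈ U := by
      intro s
      obtain ⟨u, hu, h1⟩ := hS s
      exact ⟨u.2, by rwa [show (s, u.2) = u from Prod.ext h1.symm rfl]⟩
    have hU2 : ∀ t : T, ∃ s : S, (s, t) ∈ U := by
      intro t
      obtain ⟨u, hu, h2⟩ := hT t
      exact ⟨u.1, by rwa [show (u.1, t) = u from Prod.ext rfl h2.symm]⟩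
    have key : ∀ (s s' : S) (t t' : T),
        (s, t') ∈ U → (s', t') ∈ U → (s', t) ∈ U → (s, t) ∈ U := by
      intro s s' t t' h1 h2 h3
      have heq := congrFun (congrFun hcomm ⟨(s, t'), h1⟩) ⟨(s', t), h3⟩
      have hr : Relation.Comp (fun u v : U => (u : S × T).2 = (v : S × T).2)
          (fun u v : U => (u : S × T).1 = (v : S × T).1)
          ⟨(s, t'), h1⟩ ⟨(s', t), h3⟩ := ⟨⟨(s', t'), h2⟩, rfl, rfl⟩
      rw [← heq] at hr
      obtain ⟨v, hv1, hv2⟩ := hr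
      have : ((v : S × T)) = (s, t) := Prod.ext hv1.symm hv2
      rw [← this]
      exact v.2
    let c : Con S :=
      { r := fun s s' => ∃ t, (s, t) ∈ U ∧ (s', t) ∈ U
        iseqv := ⟨fun s => (hU1 s).elim fun t h => ⟨t, h, h⟩,
          fun ⟨t, h1, h2⟩ => ⟨t, h2, h1⟩,
          fun ⟨t1, h1, h2⟩ ⟨t2, h3, h4⟩ => ⟨t2, key _ _ _ _ h1 h2 h3, h4⟩⟩
        mul' := fun ⟨t, h1, h2⟩ ⟨r, h3, h4⟩ =>
          ⟨t * r, U.mul_mem h1 h3, U.mul_mem h2 h4⟩ }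
    let f : T → S := fun t => (hU2 t).choose
    have hf : ∀ t, (f t, t) ∈ U := fun t => (hU2 t).choose_spec
    refine ⟨c.Quotient, inferInstance,
      ⟨fun s => (s : c.Quotient), fun a b => (Con.coe_mul a b)⟩,
      ⟨fun t => ((f t : S) : c.Quotient), ?_⟩, ?_, ?_, ?_⟩
    · intro a b
      show ((f (a * b) : S) : c.Quotient) = ((f a : S) : c.Quotient) * ((f b : S) : c.Quotient)
      rw [← Con.coe_mul]
      exact (Con.eq c).2 ⟨a * b, hf _, U.mul_mem (hf a) (hf b)⟩
    · exact fun q => Quot.inductionOn q fun s => ⟨s, rfl⟩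
    · intro q
      refine Quot.inductionOn q fun s => ?_
      obtain ⟨t, ht⟩ := hU1 s
      exact ⟨t, (Con.eq c).2 ⟨t, hf t, ht⟩⟩
    · intro p
      constructor
      · intro hp
        exact (Con.eq c).2 ⟨p.2, hp, hf p.2⟩
      · intro hp
        obtain ⟨t', h1, h2⟩ := (Con.eq c).1 hp
        have := key p.1 (f p.2) p.2 t' h1 h2 (hf p.2)
        rwa [Prod.mk.eta] at this
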